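/- arXiv:2512.09842 — 2 statements merged into one kernel-verified Lean document; each statement's English description precedes it below -/
import Mathlib

section
/- Besicovitch's theorem: there exists a Kakeya set K ⊆ ℝ² with Lebesgue measure |K| = 0. -/
open MeasureTheory

/-- A Kakeya set in `ℝⁿ`: a compact set containing a unit line segment in every direction. -/
def IsKakeya {n : ℕ} (K : Set (EuclideanSpace ℝ (Fin n))) : Prop :=
  IsCompact K ∧
    ∀ ω : EuclideanSpace ℝ (Fin n), ‖ω‖ = 1 →
      ∃ a : EuclideanSpace ℝ (Fin n), ∀ t ∈ Set.Icc (0 : ℝ) 1, a + t • ω ∈ K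

section BesicovitchConstruction

open Set
open scoped ENNReal NNReal


noncomputable section
namespace Bes

/-- real value of a boolean digit -/
def bv (b : Bool) : ℝ := if b then 1 else 0

lemma bv_nonneg (b : Bool) : 0 ≤ bv b := by cases b <;> simp [bv]
lemma bv_le_one (b : Bool) : bv b ≤ 1 := by cases b <;> simp [bv]
lemma abs_bv_le (b : Bool) : |bv b| ≤ 1 := by
  rw [abs_le]; constructor
  · linarith [bv_nonneg b]
  · exact bv_le_one b

/-- digit weights -/
def w (j : ℕ) : ℝ := (1/2 : ℝ) ^ (j + 1)

lemma w_pos (j : ℕ) : 0 < w j := by unfold w; positivity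
lemma w_nonneg (j : ℕ) : 0 ≤ w j := (w_pos j).le

lemma summable_w : Summable w := by
  have h : Summable (fun j : ℕ => (1/2 : ℝ) ^ j) :=
    summable_geometric_of_lt_one (by norm_num) (by norm_num)
  apply h.of_nonneg_of_le (fun j => w_nonneg j)
  intro j
  rw [w]
  apply pow_le_pow_of_le_one (by norm_num) (by norm_num) (Nat.le_succ j)

lemma tsum_w : ∑' j, w j = 1 := by
  have h : ∑' j : ℕ, (1/2 : ℝ) ^ j = 2 := by
    rw [tsum_geometric_of_lt_one (by norm_num) (by norm_num)]; norm_num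
  have : ∑' j, w j = (∑' j : ℕ, (1/2 : ℝ) ^ j) * (1/2) := by
    rw [← tsum_mul_right]
    apply tsum_congr; intro j; rw [w, pow_succ]
  rw [this, h]; norm_num

lemma w_add (n j : ℕ) : w (j + n) = (1/2 : ℝ) ^ n * w j := by
  simp [w, pow_add, pow_succ]; ring

/-- the block values: for `m ≥ 1` with `2^r ≤ m < 2^(r+1)`, `tau m = (m - 2^r)/2^r`. -/
def tau (m : ℕ) : ℝ := ((m - 2 ^ (Nat.log 2 m) : ℕ) : ℝ) / ((2 : ℝ) ^ (Nat.log 2 m))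

/-- the direction sequence -/
def tseq (j : ℕ) : ℝ := tau (Nat.log 2 (j + 1))

lemma tau_mem (m : ℕ) : tau m ∈ Icc (0:ℝ) 1 := by
  rcases Nat.eq_zero_or_pos m with h | h
  · subst h; simp [tau]
  rw [tau]
  constructor
  · apply div_nonneg (by positivity) (by positivity)
  · rw [div_le_one (by positivity)]
    have h2 : m < 2 ^ (Nat.log 2 m + 1) := Nat.lt_pow_succ_log_self (by norm_num) m
    have h3 : (m - 2 ^ (Nat.log 2 m) : ℕ) < 2 ^ (Nat.log 2 m) := by
      have h4 : 2 ^ Nat.log 2 m ≤ m := Nat.pow_log_le_self 2 h.ne'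
      omega
    calc ((m - 2 ^ (Nat.log 2 m) : ℕ) : ℝ) ≤ ((2 ^ (Nat.log 2 m) : ℕ) : ℝ) := by
          exact_mod_cast h3.le
      _ = (2:ℝ) ^ (Nat.log 2 m) := by push_cast; ring

lemma tseq_mem (j : ℕ) : tseq j ∈ Icc (0:ℝ) 1 := tau_mem _

/-- clamp to [0,1] -/
def cl (y : ℝ) : ℝ := max 0 (min y 1)

lemma cl_mem (y : ℝ) : cl y ∈ Icc (0:ℝ) 1 := by
  constructor
  · exact le_max_left _ _
  · apply max_le (by norm_num) (min_le_right _ _)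

lemma cl_eq (y : ℝ) (hy : y ∈ Icc (0:ℝ) 1) : cl y = y := by
  rw [cl, min_eq_left hy.2, max_eq_right hy.1]

lemma continuous_cl : Continuous cl := by unfold cl; fun_prop

/-- summand -/
def fterm (σ : ℕ → Bool) (y : ℝ) (j : ℕ) : ℝ := bv (σ j) * (w j * (cl y - tseq j))

lemma abs_diff_le (y : ℝ) (j : ℕ) : |cl y - tseq j| ≤ 1 := by
  have h1 := cl_mem y
  have h2 := tseq_mem j
  rw [abs_le]
  constructor
  · linarith [h1.1, h2.2]
  · linarith [h1.2, h2.1]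

lemma abs_fterm_le (σ : ℕ → Bool) (y : ℝ) (j : ℕ) : |fterm σ y j| ≤ w j := by
  rw [fterm, abs_mul, abs_mul]
  calc |bv (σ j)| * (|w j| * |cl y - tseq j|) ≤ 1 * (w j * 1) := by
        apply mul_le_mul (abs_bv_le _) _ (by positivity) (by norm_num)
        rw [abs_of_nonneg (w_nonneg j)]
        exact mul_le_mul_of_nonneg_left (abs_diff_le y j) (w_nonneg j)
    _ = w j := by ring

lemma summable_fterm (σ : ℕ → Bool) (y : ℝ) : Summable (fterm σ y) :=
  Summable.of_abs (summable_w.of_nonneg_of_le (fun _ => abs_nonneg _) (abs_fterm_le σ y))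

/-- the x-coordinate function -/
def g (σ : ℕ → Bool) (y : ℝ) : ℝ := ∑' j, fterm σ y j

def sval (σ : ℕ → Bool) : ℝ := ∑' j, bv (σ j) * w j
def cval (σ : ℕ → Bool) : ℝ := ∑' j, bv (σ j) * (w j * tseq j)

lemma summable_sw (σ : ℕ → Bool) : Summable (fun j => bv (σ j) * w j) := by
  apply summable_w.of_nonneg_of_le (fun j => mul_nonneg (bv_nonneg _) (w_nonneg j))
  intro j
  calc bv (σ j) * w j ≤ 1 * w j :=
        mul_le_mul_of_nonneg_right (bv_le_one _) (w_nonneg j)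
    _ = w j := one_mul _

lemma summable_swt (σ : ℕ → Bool) : Summable (fun j => bv (σ j) * (w j * tseq j)) := by
  apply summable_w.of_nonneg_of_le
  · intro j
    have := bv_nonneg (σ j); have := w_nonneg j; have := (tseq_mem j).1
    positivity
  · intro j
    have h1 := (tseq_mem j).2
    have h2 := bv_le_one (σ j)
    have h3 := bv_nonneg (σ j); have h4 := w_nonneg j; have h5 := (tseq_mem j).1
    calc bv (σ j) * (w j * tseq j) ≤ 1 * (w j * tseq j) := by
          apply mul_le_mul_of_nonneg_right h2 (by positivity)
      _ = w j * tseq j := one_mul _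
      _ ≤ w j * 1 := mul_le_mul_of_nonneg_left h1 h4
      _ = w j := mul_one _

lemma g_eq (σ : ℕ → Bool) (y : ℝ) : g σ y = sval σ * cl y - cval σ := by
  rw [g, sval, cval, ← tsum_mul_right, ← Summable.tsum_sub ((summable_sw σ).mul_right _) (summable_swt σ)]
  apply tsum_congr; intro j; rw [fterm]; ring


/-! ### Binary digits: surjectivity of `sval` onto `[0,1]` -/

lemma tsum_sw_all_true : sval (fun _ => true) = 1 := by
  rw [sval]
  have : (fun j : ℕ => bv true * w j) = w := by funext j; simp [bv]
  rw [this, tsum_w]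

lemma exists_sigma (s : ℝ) (hs : s ∈ Icc (0:ℝ) 1) : ∃ σ : ℕ → Bool, sval σ = s := by
  rcases eq_or_lt_of_le hs.2 with h1 | h1
  · exact ⟨fun _ => true, by rw [tsum_sw_all_true, h1]⟩
  -- s < 1 case: binary digits
  set d : ℕ → ℕ := fun n => ⌊2 ^ (n+1) * s⌋₊ - 2 * ⌊2 ^ n * s⌋₊ with hd
  have hfl : ∀ n : ℕ, ((⌊2 ^ n * s⌋₊ : ℝ)) ≤ 2 ^ n * s := fun n =>
    Nat.floor_le (mul_nonneg (by positivity) hs.1)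
  have hfl2 : ∀ n : ℕ, 2 ^ n * s < (⌊2 ^ n * s⌋₊ : ℝ) + 1 := fun n =>
    Nat.lt_floor_add_one _
  have hmono : ∀ n : ℕ, 2 * ⌊2 ^ n * s⌋₊ ≤ ⌊2 ^ (n+1) * s⌋₊ := by
    intro n
    apply Nat.le_floor
    push_cast
    calc 2 * (⌊2 ^ n * s⌋₊ : ℝ) ≤ 2 * (2 ^ n * s) := by linarith [hfl n]
      _ = 2 ^ (n+1) * s := by ring
  have hdle : ∀ n : ℕ, d n ≤ 1 := by
    intro n
    rw [hd]
    simp only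
    have h2 : (⌊2 ^ (n+1) * s⌋₊ : ℝ) < 2 * (⌊2 ^ n * s⌋₊ : ℝ) + 2 := by
      calc (⌊2 ^ (n+1) * s⌋₊ : ℝ) ≤ 2 ^ (n+1) * s := hfl (n+1)
        _ = 2 * (2 ^ n * s) := by ring
        _ < 2 * ((⌊2 ^ n * s⌋₊ : ℝ) + 1) := by linarith [hfl2 n]
        _ = 2 * (⌊2 ^ n * s⌋₊ : ℝ) + 2 := by ring
    have h3 : ⌊2 ^ (n+1) * s⌋₊ < 2 * ⌊2 ^ n * s⌋₊ + 2 := by exact_mod_cast h2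
    omega
  refine ⟨fun n => decide (d n = 1), ?_⟩
  have hbv : ∀ n : ℕ, bv (decide (d n = 1)) = (d n : ℝ) := by
    intro n
    rcases Nat.le_one_iff_eq_zero_or_eq_one.mp (hdle n) with h | h <;> simp [bv, h]
  -- partial sums
  have hpartial : ∀ n : ℕ,
      ∑ j ∈ Finset.range n, bv (decide (d j = 1)) * w j = (⌊2 ^ n * s⌋₊ : ℝ) / 2 ^ n := by
    intro n
    induction n with
    | zero =>
      simp [Nat.floor_eq_zero.mpr h1]
    | succ n ih =>
      rw [Finset.sum_range_succ, ih, hbv, hd]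
      simp only
      have hcast : ((⌊2 ^ (n+1) * s⌋₊ - 2 * ⌊2 ^ n * s⌋₊ : ℕ) : ℝ)
          = (⌊2 ^ (n+1) * s⌋₊ : ℝ) - 2 * (⌊2 ^ n * s⌋₊ : ℝ) := by
        push_cast [hmono n]; ring
      rw [hcast, w, div_pow, one_pow]
      have h2n : (2:ℝ) ^ n ≠ 0 := by positivity
      have h2n1 : (2:ℝ) ^ (n+1) ≠ 0 := by positivity
      field_simp
      ring
  -- the partial sums tend to s
  have hsum : Summable (fun j => bv (decide (d j = 1)) * w j) := summable_sw _
  have hhs : HasSum (fun j => bv (decide (d j = 1)) * w j) (sval (fun n => decide (d n = 1))) :=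
    hsum.hasSum
  have htends := hhs.tendsto_sum_nat
  have htends2 : Filter.Tendsto
      (fun n => ∑ j ∈ Finset.range n, bv (decide (d j = 1)) * w j) Filter.atTop (nhds s) := by
    have heq : ∀ n, |(∑ j ∈ Finset.range n, bv (decide (d j = 1)) * w j) - s| ≤ (1/2)^n := by
      intro n
      rw [hpartial n, abs_le]
      have h2n : (0:ℝ) < 2 ^ n := by positivity
      constructor
      · rw [div_sub' h2n.ne', le_div_iff₀ h2n]
        have := hfl2 n
        have hh : (1/2:ℝ)^n * 2^n = 1 := by
          rw [← mul_pow]; norm_num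
        nlinarith
      · rw [sub_le_iff_le_add]
        have := hfl n
        have hp : (⌊2 ^ n * s⌋₊ : ℝ) / 2 ^ n ≤ s := by
          rw [div_le_iff₀ h2n]; linarith [hfl n]
        have : (0:ℝ) ≤ (1/2)^n := by positivity
        linarith
    have hgeo : Filter.Tendsto (fun n : ℕ => (1/2:ℝ)^n) Filter.atTop (nhds 0) :=
      tendsto_pow_atTop_nhds_zero_of_lt_one (by norm_num) (by norm_num)
    rw [Metric.tendsto_atTop]
    intro ε hε
    rw [Metric.tendsto_atTop] at hgeo
    obtain ⟨N, hN⟩ := hgeo ε hε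
    refine ⟨N, fun n hn => ?_⟩
    have := hN n hn
    rw [Real.dist_eq] at this ⊢
    have h0 : (0:ℝ) ≤ (1/2)^n := by positivity
    rw [sub_zero, abs_of_nonneg h0] at this
    exact lt_of_le_of_lt (heq n) this
  exact tendsto_nhds_unique htends htends2


/-! ### The key approximation property of `tseq` -/

lemma exists_block (y : ℝ) (hy : y ∈ Icc (0:ℝ) 1) (ε : ℝ) (hε : 0 < ε) :
    ∃ n L : ℕ, (1/2:ℝ) ^ L ≤ ε ∧ ∀ j, n ≤ j → j < n + L → |y - tseq j| ≤ ε := by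
  -- choose r with (1/2)^r ≤ ε
  obtain ⟨r, hr⟩ := exists_pow_lt_of_lt_one hε (by norm_num : (1/2:ℝ) < 1)
  set i : ℕ := min (Nat.floor (y * 2 ^ r)) (2 ^ r - 1) with hi
  set m : ℕ := 2 ^ r + i with hm
  refine ⟨2 ^ m - 1, r, hr.le, ?_⟩
  have hi_lt : i < 2 ^ r := by
    have h1 : (0:ℕ) < 2 ^ r := Nat.pow_pos (by norm_num)
    omega
  have hm_lt : m < 2 ^ (r + 1) := by
    rw [hm, pow_succ]
    omega
  have hlog_m : Nat.log 2 m = r :=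
    Nat.log_eq_of_pow_le_of_lt_pow (by omega) (by omega)
  have hr_lt_m : r < m := by
    have := Nat.lt_two_pow_self (n := r)
    omega
  have hm_lt_2m : m < 2 ^ m := Nat.lt_two_pow_self (n := m)
  -- value of tau m
  have htau : tau m = (i : ℝ) / 2 ^ r := by
    rw [tau, hlog_m]
    congr 2
    · omega
  -- |y - i/2^r| ≤ (1/2)^r
  have happrox : |y - (i:ℝ) / 2 ^ r| ≤ (1/2) ^ r := by
    have h2r : (0:ℝ) < 2 ^ r := by positivity
    have hhalf : (1/2:ℝ) ^ r = 1 / 2 ^ r := by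
      rw [div_pow, one_pow]
    rcases le_or_gt (Nat.floor (y * 2 ^ r)) (2 ^ r - 1) with hc | hc
    · have hieq : i = Nat.floor (y * 2 ^ r) := by omega
      have hfl1 : ((i:ℕ) : ℝ) ≤ y * 2 ^ r := by
        rw [hieq]; exact Nat.floor_le (mul_nonneg hy.1 h2r.le)
      have hfl2 : y * 2 ^ r < (i : ℝ) + 1 := by
        rw [hieq]; exact Nat.lt_floor_add_one _
      rw [abs_le, hhalf]
      constructor
      · have h5 : (i:ℝ)/2^r ≤ y := by rw [div_le_iff₀ h2r]; exact hfl1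
        have h6 : (0:ℝ) < 1/2^r := by positivity
        linarith
      · have h5 : y ≤ ((i:ℝ)+1)/2^r := by rw [le_div_iff₀ h2r]; linarith
        have h6 : ((i:ℝ)+1)/2^r = (i:ℝ)/2^r + 1/2^r := by ring
        linarith
    · -- floor ≥ 2^r, so y = 1
      have h1 : (2:ℕ) ^ r ≤ Nat.floor (y * 2 ^ r) := by omega
      have h2 : ((2 ^ r : ℕ) : ℝ) ≤ y * 2 ^ r :=
        (Nat.le_floor_iff (mul_nonneg hy.1 h2r.le)).mp h1
      have h3 : (1:ℝ) ≤ y := by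
        have : ((2 ^ r : ℕ) : ℝ) = (2:ℝ) ^ r := by push_cast; ring
        rw [this] at h2
        nlinarith
      have hy1 : y = 1 := le_antisymm hy.2 h3
      have hieq : i = 2 ^ r - 1 := by omega
      have hcast : ((i:ℕ) : ℝ) = (2:ℝ) ^ r - 1 := by
        rw [hieq]
        have : (1:ℕ) ≤ 2 ^ r := Nat.one_le_two_pow
        push_cast [this]
        ring
      rw [hy1, hcast, hhalf]
      have h7 : ((2:ℝ)^r - 1)/2^r = 1 - 1/2^r := by field_simp
      rw [h7]
      have h6 : (0:ℝ) < 1/2^r := by positivity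
      rw [abs_le]
      constructor <;> · simp only [sub_sub_cancel]; linarith
  -- conclusion
  intro j hj1 hj2
  have hlog_j : Nat.log 2 (j + 1) = m := by
    apply Nat.log_eq_of_pow_le_of_lt_pow
    · omega
    · rw [pow_succ]
      have h2m : r < 2 ^ m := lt_trans hr_lt_m hm_lt_2m
      omega
  have : tseq j = tau m := by rw [tseq, hlog_j]
  rw [this, htau]
  calc |y - (i:ℝ)/2^r| ≤ (1/2)^r := happrox
    _ ≤ ε := hr.le


/-! ### Every slice is null -/

lemma slice_le (y : ℝ) (ε : ℝ) (hε : 0 < ε) :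
    volume (range fun σ : ℕ → Bool => g σ y) ≤ ENNReal.ofReal (4 * ε) := by
  obtain ⟨n, L, hL, hblock⟩ := exists_block (cl y) (cl_mem y) ε hε
  set ext : (Fin n → Bool) → (ℕ → Bool) := fun p k => if h : k < n then p ⟨k, h⟩ else false
    with hext
  set T : ℝ := ε * (1/2)^n + (1/2)^(n+L) with hT
  have hT0 : 0 ≤ T := by positivity
  set V : Finset ℝ :=
    Finset.image (fun p : Fin n → Bool => ∑ j ∈ Finset.range n, fterm (ext p) y j)
      Finset.univ with hV
  -- shifted summability
  have hws : Summable (fun j => w (j + n)) :=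
    (summable_w.mul_left ((1/2:ℝ)^n)).congr (fun j => (w_add n j).symm)
  -- the covering
  have hcover : (range fun σ : ℕ → Bool => g σ y) ⊆ ⋃ v ∈ V, Icc (v - T) (v + T) := by
    rintro x ⟨σ, rfl⟩
    set p : Fin n → Bool := fun j => σ j with hp
    set v : ℝ := ∑ j ∈ Finset.range n, fterm (ext p) y j with hv
    have hvV : v ∈ V := Finset.mem_image_of_mem _ (Finset.mem_univ p)
    have hhead : v = ∑ j ∈ Finset.range n, fterm σ y j := by
      apply Finset.sum_congr rfl
      intro j hj
      have hjn : j < n := Finset.mem_range.mp hj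
      have : ext p j = σ j := by simp [hext, hjn, hp]
      rw [fterm, fterm, this]
    have hsplit : v + ∑' j, fterm σ y (j + n) = g σ y := by
      rw [hhead]; exact Summable.sum_add_tsum_nat_add n (summable_fterm σ y)
    -- tail bound
    set b : ℕ → ℝ := fun j => if j < L then w (j+n) * ε else w (j+n) with hb
    have hble : ∀ j, |fterm σ y (j + n)| ≤ b j := by
      intro j
      rw [hb]
      by_cases hj : j < L
      · simp only [hj, if_true]
        rw [fterm, abs_mul, abs_mul]
        have h1 : |cl y - tseq (j + n)| ≤ ε := by
          have := hblock (j + n) (by omega) (by omega)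
          exact this
        calc |bv (σ (j+n))| * (|w (j+n)| * |cl y - tseq (j+n)|)
            ≤ 1 * (w (j+n) * ε) := by
              apply mul_le_mul (abs_bv_le _) _ (by positivity) (by norm_num)
              rw [abs_of_nonneg (w_nonneg _)]
              exact mul_le_mul_of_nonneg_left h1 (w_nonneg _)
          _ = w (j+n) * ε := one_mul _
      · simp only [hj, if_false]
        exact abs_fterm_le σ y (j + n)
    have hb0 : ∀ j, 0 ≤ b j := by
      intro j; rw [hb]
      by_cases hj : j < L
      · simp only [hj, if_true]; exact mul_nonneg (w_nonneg _) hε.le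
      · simp only [hj, if_false]; exact w_nonneg _
    have hsb : Summable b := by
      apply (hws.mul_left (max ε 1)).of_nonneg_of_le hb0
      intro j
      rw [hb]
      by_cases hj : j < L
      · simp only [hj, if_true]
        calc w (j+n) * ε ≤ w (j+n) * max ε 1 :=
              mul_le_mul_of_nonneg_left (le_max_left _ _) (w_nonneg _)
          _ = max ε 1 * w (j+n) := mul_comm _ _
      · simp only [hj, if_false]
        calc w (j+n) = 1 * w (j+n) := (one_mul _).symm
          _ ≤ max ε 1 * w (j+n) :=
              mul_le_mul_of_nonneg_right (le_max_right _ _) (w_nonneg _)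
    have hsabs : Summable (fun j => |fterm σ y (j + n)|) :=
      hsb.of_nonneg_of_le (fun _ => abs_nonneg _) hble
    have htail : |∑' j, fterm σ y (j + n)| ≤ T := by
      have h1 : |∑' j, fterm σ y (j + n)| ≤ ∑' j, |fterm σ y (j + n)| := by
        simpa using norm_tsum_le_tsum_norm (f := fun j => fterm σ y (j + n)) (by simpa using hsabs)
      have h2 : ∑' j, |fterm σ y (j + n)| ≤ ∑' j, b j := Summable.tsum_le_tsum hble hsabs hsb
      have h3 : ∑' j, b j ≤ T := by
        rw [← Summable.sum_add_tsum_nat_add L hsb, hT]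
        have hfirst : ∑ j ∈ Finset.range L, b j ≤ ε * (1/2)^n := by
          have heq : ∀ j ∈ Finset.range L, b j = w (j+n) * ε := by
            intro j hj
            rw [hb]; simp [Finset.mem_range.mp hj]
          rw [Finset.sum_congr rfl heq, ← Finset.sum_mul]
          have hsum_le : ∑ j ∈ Finset.range L, w (j+n) ≤ (1/2)^n := by
            have h4 : ∑ j ∈ Finset.range L, w (j+n)
                = (1/2)^n * ∑ j ∈ Finset.range L, w j := by
              rw [Finset.mul_sum]
              exact Finset.sum_congr rfl (fun j _ => w_add n j)
            rw [h4]
            have h5 : ∑ j ∈ Finset.range L, w j ≤ 1 := by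
              rw [← tsum_w]
              exact Summable.sum_le_tsum _ (fun j _ => w_nonneg j) summable_w
            nlinarith [pow_nonneg (by norm_num : (0:ℝ) ≤ 1/2) n]
          calc (∑ j ∈ Finset.range L, w (j+n)) * ε ≤ (1/2)^n * ε :=
                mul_le_mul_of_nonneg_right hsum_le hε.le
            _ = ε * (1/2)^n := mul_comm _ _
        have hsecond : ∑' j, b (j + L) = (1/2)^(n+L) := by
          have heq : ∀ j : ℕ, b (j + L) = w (j + L + n) := by
            intro j; rw [hb]; simp
          rw [tsum_congr heq]
          have heq2 : ∀ j : ℕ, w (j + L + n) = (1/2)^(n+L) * w j := by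
            intro j
            rw [show j + L + n = j + (L + n) by ring, w_add, show L + n = n + L by ring]
          rw [tsum_congr heq2, tsum_mul_left, tsum_w, mul_one]
        rw [hsecond]
        linarith
      linarith
    -- conclude membership
    refine mem_biUnion hvV ?_
    show g σ y ∈ Icc (v - T) (v + T)
    rw [← hsplit]
    constructor
    · have := (abs_le.mp htail).1; linarith
    · have := (abs_le.mp htail).2; linarith
  -- measure estimate
  calc volume (range fun σ : ℕ → Bool => g σ y)
      ≤ volume (⋃ v ∈ V, Icc (v - T) (v + T)) := measure_mono hcover
    _ ≤ ∑ v ∈ V, volume (Icc (v - T) (v + T)) := measure_biUnion_finset_le V _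
    _ = ∑ v ∈ V, ENNReal.ofReal (2 * T) := by
        apply Finset.sum_congr rfl
        intro v _
        rw [Real.volume_Icc]
        congr 1
        ring
    _ = (V.card : ℝ≥0∞) * ENNReal.ofReal (2 * T) := by
        rw [Finset.sum_const, nsmul_eq_mul]
    _ ≤ (2^n : ℝ≥0∞) * ENNReal.ofReal (2 * T) := by
        apply mul_le_mul_left
        have h1 : V.card ≤ (Finset.univ : Finset (Fin n → Bool)).card :=
          Finset.card_image_le
        have h2 : (Finset.univ : Finset (Fin n → Bool)).card = 2^n := by
          rw [Finset.card_univ]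
          simp [Fintype.card_fun]
        calc (V.card : ℝ≥0∞) ≤ ((2^n : ℕ) : ℝ≥0∞) := by exact_mod_cast h1.trans h2.le
          _ = (2^n : ℝ≥0∞) := by push_cast; ring
    _ ≤ ENNReal.ofReal (4 * ε) := by
        rw [show (2:ℝ≥0∞)^n = ENNReal.ofReal ((2:ℝ)^n) by
              rw [ENNReal.ofReal_pow (by norm_num)]; norm_num,
            ← ENNReal.ofReal_mul (by positivity)]
        apply ENNReal.ofReal_le_ofReal
        have hpow : (2:ℝ)^n * (1/2)^n = 1 := by
          rw [← mul_pow]; norm_num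
        have hpow2 : (2:ℝ)^n * (1/2)^(n+L) = (1/2)^L := by
          rw [pow_add, ← mul_assoc, hpow, one_mul]
        calc (2:ℝ)^n * (2 * T) = 2 * (ε * ((2:ℝ)^n * (1/2)^n)) + 2 * ((2:ℝ)^n * (1/2)^(n+L)) := by
              rw [hT]; ring
          _ = 2 * ε + 2 * (1/2)^L := by rw [hpow, hpow2, mul_one]
          _ ≤ 4 * ε := by linarith

lemma slice_null (y : ℝ) : volume (range fun σ : ℕ → Bool => g σ y) = 0 := by
  refine le_antisymm ?_ zero_le
  apply ENNReal.le_of_forall_pos_le_add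
  intro ε hε _
  rw [zero_add]
  have h8 : (0:ℝ) < (ε:ℝ) / 8 := by positivity
  calc volume (range fun σ : ℕ → Bool => g σ y)
      ≤ ENNReal.ofReal (4 * ((ε:ℝ)/8)) := slice_le y _ h8
    _ ≤ (ε : ℝ≥0∞) := by
        rw [show (4:ℝ) * ((ε:ℝ)/8) = (ε:ℝ)/2 by ring]
        calc ENNReal.ofReal ((ε:ℝ)/2) ≤ ENNReal.ofReal (ε:ℝ) :=
              ENNReal.ofReal_le_ofReal (by linarith [h8])
          _ = (ε : ℝ≥0∞) := ENNReal.ofReal_coe_nnreal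


/-! ### The basic Besicovitch set `K0` in the plane (coordinates `(y, x)`) -/

def K0 : Set (ℝ × ℝ) := (fun q : (ℕ → Bool) × ℝ => (q.2, g q.1 q.2)) '' (univ ×ˢ Icc 0 1)

lemma continuous_g : Continuous (fun q : (ℕ → Bool) × ℝ => g q.1 q.2) := by
  apply continuous_tsum (u := w) ?_ summable_w ?_
  · intro j
    have h1 : Continuous fun q : (ℕ → Bool) × ℝ => bv (q.1 j) := by
      have h0 : Continuous fun q : (ℕ → Bool) × ℝ => q.1 j :=
        (continuous_apply j).comp continuous_fst
      exact (continuous_of_discreteTopology (f := bv)).comp h0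
    have h2 : Continuous fun q : (ℕ → Bool) × ℝ => w j * (cl q.2 - tseq j) :=
      continuous_const.mul ((continuous_cl.comp continuous_snd).sub continuous_const)
    exact h1.mul h2
  · intro j q
    rw [Real.norm_eq_abs]
    exact abs_fterm_le _ _ _

lemma isCompact_K0 : IsCompact K0 :=
  (isCompact_univ.prod isCompact_Icc).image (continuous_snd.prodMk continuous_g)

lemma measurableSet_K0 : MeasurableSet K0 := isCompact_K0.isClosed.measurableSet

lemma volume_K0 : volume K0 = 0 := by
  rw [Measure.volume_eq_prod, Measure.prod_apply measurableSet_K0]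
  have hslice : ∀ y : ℝ, volume (Prod.mk y ⁻¹' K0) = 0 := by
    intro y
    apply measure_mono_null (t := range fun σ : ℕ → Bool => g σ y) ?_ (slice_null y)
    rintro x hx
    obtain ⟨⟨σ, y'⟩, _, heq⟩ := hx
    have h1 : y' = y := congrArg Prod.fst heq
    have h2 : g σ y' = x := congrArg Prod.snd heq
    exact ⟨σ, by simp only []; rw [← h1]; exact h2⟩
  calc ∫⁻ y, volume (Prod.mk y ⁻¹' K0) = ∫⁻ _ : ℝ, 0 := lintegral_congr hslice
    _ = 0 := lintegral_zero

/-! ### Symmetrization -/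

def f1 : ℝ × ℝ → ℝ × ℝ := fun p => (p.1, -p.2)
def f2 : ℝ × ℝ → ℝ × ℝ := Prod.swap
def f3 : ℝ × ℝ → ℝ × ℝ := fun p => (-p.2, p.1)
def f3i : ℝ × ℝ → ℝ × ℝ := fun p => (p.2, -p.1)

def K' : Set (ℝ × ℝ) := (K0 ∪ f1 ⁻¹' K0) ∪ (f2 ⁻¹' K0 ∪ f3 ⁻¹' K0)

lemma pre_f1 : f1 ⁻¹' K0 = f1 '' K0 := by
  ext p
  constructor
  · intro h
    exact ⟨f1 p, h, by simp [f1]⟩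
  · rintro ⟨q, hq, rfl⟩
    show f1 (f1 q) ∈ K0
    simpa [f1] using hq

lemma pre_f2 : f2 ⁻¹' K0 = f2 '' K0 := by
  ext p
  constructor
  · intro h
    exact ⟨f2 p, h, by simp [f2]⟩
  · rintro ⟨q, hq, rfl⟩
    show f2 (f2 q) ∈ K0
    simpa [f2] using hq

lemma pre_f3 : f3 ⁻¹' K0 = f3i '' K0 := by
  ext p
  constructor
  · intro h
    exact ⟨f3 p, h, by simp [f3, f3i]⟩
  · rintro ⟨q, hq, rfl⟩
    show f3 (f3i q) ∈ K0
    simpa [f3, f3i] using hq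

lemma isCompact_K' : IsCompact K' := by
  apply IsCompact.union <;> apply IsCompact.union
  · exact isCompact_K0
  · rw [pre_f1]
    exact isCompact_K0.image (by unfold f1; fun_prop)
  · rw [pre_f2]
    exact isCompact_K0.image continuous_swap
  · rw [pre_f3]
    exact isCompact_K0.image (by unfold f3i; fun_prop)

lemma mp_f1 : MeasurePreserving f1 volume volume := by
  have h := (MeasurePreserving.id (volume : Measure ℝ)).prod
    (Measure.measurePreserving_neg (volume : Measure ℝ))
  rw [← Measure.volume_eq_prod] at h
  have : f1 = Prod.map (fun x : ℝ => x) (fun x : ℝ => -x) := by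
    funext p; rfl
  rw [this]
  exact h

lemma mp_f2 : MeasurePreserving f2 volume volume := by
  have h := Measure.measurePreserving_swap (μ := (volume : Measure ℝ)) (ν := (volume : Measure ℝ))
  rw [← Measure.volume_eq_prod] at h
  exact h

lemma mp_f3 : MeasurePreserving f3 volume volume := by
  have h := mp_f2.comp mp_f1
  have : f3 = f2 ∘ f1 := by funext p; rfl
  rw [this]
  exact h

lemma volume_K' : volume K' = 0 := by
  have h0 : NullMeasurableSet K0 (volume : Measure (ℝ × ℝ)) := measurableSet_K0.nullMeasurableSet
  apply measure_union_null <;> apply measure_union_null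
  · exact volume_K0
  · rw [mp_f1.measure_preimage h0]; exact volume_K0
  · rw [mp_f2.measure_preimage h0]; exact volume_K0
  · rw [mp_f3.measure_preimage h0]; exact volume_K0


/-! ### Segments in every direction -/

lemma segA (p : ℝ × ℝ) (h1 : 0 < p.1) (h2 : p.1 ≤ 1) (h3 : 0 ≤ p.2) (h4 : p.2 ≤ p.1) :
    ∃ a : ℝ × ℝ, ∀ t ∈ Icc (0:ℝ) 1, a + t • p ∈ K0 := by
  obtain ⟨σ, hσ⟩ := exists_sigma (p.2 / p.1)
    ⟨div_nonneg h3 h1.le, (div_le_one h1).mpr h4⟩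
  refine ⟨(0, -cval σ), ?_⟩
  intro t ht
  have hy : t * p.1 ∈ Icc (0:ℝ) 1 := by
    constructor
    · exact mul_nonneg ht.1 h1.le
    · calc t * p.1 ≤ 1 * 1 := mul_le_mul ht.2 h2 h1.le (by norm_num)
        _ = 1 := by norm_num
  refine ⟨(σ, t * p.1), ⟨mem_univ _, hy⟩, ?_⟩
  show (t * p.1, g σ (t * p.1)) = (0, -cval σ) + t • p
  have hgval : g σ (t * p.1) = -cval σ + t * p.2 := by
    rw [g_eq, hσ, cl_eq _ hy]
    field_simp
    ring
  rw [hgval]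
  show _ = (0 + t * p.1, -cval σ + t * p.2)
  rw [zero_add]

lemma seg_neg {S : Set (ℝ × ℝ)} {p : ℝ × ℝ}
    (h : ∃ a : ℝ × ℝ, ∀ t ∈ Icc (0:ℝ) 1, a + t • (-p) ∈ S) :
    ∃ a : ℝ × ℝ, ∀ t ∈ Icc (0:ℝ) 1, a + t • p ∈ S := by
  obtain ⟨a, ha⟩ := h
  refine ⟨a + (-p), ?_⟩
  intro t ht
  have h1 : a + (-p) + t • p = a + (1 - t) • (-p) := by
    rw [smul_neg, sub_smul, one_smul]
    abel
  rw [h1]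
  exact ha (1 - t) ⟨by linarith [ht.2], by linarith [ht.1]⟩

lemma segK'_pos (p : ℝ × ℝ) (hp : p.1 ^ 2 + p.2 ^ 2 = 1) (hp1 : 0 ≤ p.1) :
    ∃ a : ℝ × ℝ, ∀ t ∈ Icc (0:ℝ) 1, a + t • p ∈ K' := by
  have habs1 : p.1 ≤ 1 := by nlinarith
  have habs2 : p.2 ≤ 1 := by nlinarith
  have habs2' : -1 ≤ p.2 := by nlinarith
  rcases le_or_gt 0 p.2 with h2 | h2
  · rcases le_or_gt p.2 p.1 with h3 | h3
    · -- region A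
      have hp1' : 0 < p.1 := by
        rcases eq_or_lt_of_le hp1 with h | h
        · exfalso; nlinarith
        · exact h
      obtain ⟨a, ha⟩ := segA p hp1' habs1 h2 h3
      exact ⟨a, fun t ht => Or.inl (Or.inl (ha t ht))⟩
    · -- region f2 (swap) : 0 ≤ p.1 < p.2
      have hq : 0 < p.2 := lt_of_le_of_lt hp1 h3
      obtain ⟨a, ha⟩ := segA (p.2, p.1) hq habs2 hp1 h3.le
      refine ⟨f2 a, fun t ht => ?_⟩
      have : f2 (f2 a + t • p) = a + t • (p.2, p.1) := by
        show (_, _) = (_, _)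
        simp [f2, Prod.swap]
      refine Or.inr (Or.inl ?_)
      show f2 (f2 a + t • p) ∈ K0
      rw [this]
      exact ha t ht
  · rcases le_or_gt (-p.2) p.1 with h3 | h3
    · -- region f1 : p.2 < 0, -p.2 ≤ p.1
      have hp1' : 0 < p.1 := lt_of_lt_of_le (by linarith) h3
      obtain ⟨a, ha⟩ := segA (p.1, -p.2) hp1' habs1 (show (0:ℝ) ≤ -p.2 by linarith) h3
      refine ⟨f1 a, fun t ht => ?_⟩
      have : f1 (f1 a + t • p) = a + t • (p.1, -p.2) := by
        show (_, _) = (_, _)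
        simp [f1]
        ring
      refine Or.inl (Or.inr ?_)
      show f1 (f1 a + t • p) ∈ K0
      rw [this]
      exact ha t ht
    · -- region f3 : p.2 < 0, p.1 < -p.2
      have hq : 0 < -p.2 := by linarith
      obtain ⟨a, ha⟩ := segA (-p.2, p.1) hq (show -p.2 ≤ (1:ℝ) by linarith) hp1 h3.le
      refine ⟨f3i a, fun t ht => ?_⟩
      have : f3 (f3i a + t • p) = a + t • (-p.2, p.1) := by
        show (_, _) = (_, _)
        simp [f3, f3i]
        ring
      refine Or.inr (Or.inr ?_)
      show f3 (f3i a + t • p) ∈ K0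
      rw [this]
      exact ha t ht

lemma segK' (p : ℝ × ℝ) (hp : p.1 ^ 2 + p.2 ^ 2 = 1) :
    ∃ a : ℝ × ℝ, ∀ t ∈ Icc (0:ℝ) 1, a + t • p ∈ K' := by
  rcases le_or_gt 0 p.1 with h1 | h1
  · exact segK'_pos p hp h1
  · apply seg_neg
    have hneg : (-p).1 ^ 2 + (-p).2 ^ 2 = 1 := by
      simp only [Prod.fst_neg, Prod.snd_neg]
      nlinarith
    exact segK'_pos (-p) hneg (by simp [Prod.fst_neg]; linarith)


/-! ### Transfer to `EuclideanSpace ℝ (Fin 2)` -/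

def myF : EuclideanSpace ℝ (Fin 2) → ℝ × ℝ := fun x => (x 0, x 1)

def myFinv : ℝ × ℝ → EuclideanSpace ℝ (Fin 2) :=
  fun p => (WithLp.equiv 2 (Fin 2 → ℝ)).symm ![p.1, p.2]

lemma myF_myFinv (p : ℝ × ℝ) : myF (myFinv p) = p := by
  rw [myF, myFinv]
  apply Prod.ext <;> simp

lemma myFinv_myF (x : EuclideanSpace ℝ (Fin 2)) : myFinv (myF x) = x := by
  rw [myF, myFinv]
  ext i
  fin_cases i <;> simp

lemma continuous_myF : Continuous myF := by
  have h := PiLp.continuous_ofLp 2 (fun _ : Fin 2 => ℝ)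
  exact ((continuous_apply (0 : Fin 2)).comp h).prodMk ((continuous_apply (1 : Fin 2)).comp h)

lemma continuous_myFinv : Continuous myFinv := by
  apply (PiLp.continuous_toLp 2 (fun _ : Fin 2 => ℝ)).comp
  apply continuous_pi
  intro i
  fin_cases i
  · simpa using continuous_fst
  · simpa using continuous_snd

lemma mp_myF : MeasurePreserving myF volume volume := by
  have h := (volume_preserving_finTwoArrow ℝ).comp
    (EuclideanSpace.volume_preserving_symm_measurableEquiv_toLp (Fin 2))
  exact h

lemma myF_linear (a ω : EuclideanSpace ℝ (Fin 2)) (t : ℝ) :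
    myF (a + t • ω) = myF a + t • myF ω := by
  rw [myF]
  apply Prod.ext
  · show (a + t • ω) 0 = a 0 + t • ω 0
    rw [PiLp.add_apply, PiLp.smul_apply]
  · show (a + t • ω) 1 = a 1 + t • ω 1
    rw [PiLp.add_apply, PiLp.smul_apply]

lemma norm_sq (ω : EuclideanSpace ℝ (Fin 2)) (hω : ‖ω‖ = 1) :
    (myF ω).1 ^ 2 + (myF ω).2 ^ 2 = 1 := by
  have h := EuclideanSpace.norm_eq ω
  rw [hω] at h
  have h2 : ∑ i : Fin 2, ‖ω i‖ ^ 2 = ‖ω 0‖ ^ 2 + ‖ω 1‖ ^ 2 := Fin.sum_univ_two _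
  rw [h2] at h
  have h3 : ‖ω 0‖ ^ 2 + ‖ω 1‖ ^ 2 = 1 := by
    have h4 : (0:ℝ) ≤ ‖ω 0‖ ^ 2 + ‖ω 1‖ ^ 2 := by positivity
    nlinarith [Real.sq_sqrt h4, h.symm]
  show (ω 0) ^ 2 + (ω 1) ^ 2 = 1
  rw [Real.norm_eq_abs, Real.norm_eq_abs, sq_abs, sq_abs] at h3
  exact h3

lemma image_eq : myFinv '' K' = myF ⁻¹' K' := by
  ext x
  constructor
  · rintro ⟨p, hp, rfl⟩
    show myF (myFinv p) ∈ K'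
    rw [myF_myFinv]
    exact hp
  · intro hx
    exact ⟨myF x, hx, myFinv_myF x⟩

end Bes

end

end BesicovitchConstruction

/-- **Besicovitch's theorem**: there exists a Kakeya set `K ⊆ ℝ²` of Lebesgue measure zero. -/
theorem besicovitch_kakeya_measure_zero :
    ∃ K : Set (EuclideanSpace ℝ (Fin 2)), IsKakeya K ∧ volume K = 0 := by
  refine ⟨Bes.myFinv '' Bes.K', ⟨?_, ?_⟩, ?_⟩
  · exact Bes.isCompact_K'.image Bes.continuous_myFinv
  · intro ω hω
    obtain ⟨a', ha'⟩ := Bes.segK' (Bes.myF ω) (Bes.norm_sq ω hω)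
    refine ⟨Bes.myFinv a', ?_⟩
    intro t ht
    rw [Bes.image_eq]
    show Bes.myF (Bes.myFinv a' + t • ω) ∈ Bes.K'
    rw [Bes.myF_linear, Bes.myF_myFinv]
    exact ha' t ht
  · rw [Bes.image_eq,
      Bes.mp_myF.measure_preimage Bes.isCompact_K'.isClosed.measurableSet.nullMeasurableSet]
    exact Bes.volume_K'
end

section
/- Kakeya sets of arbitrarily small area: for every ε > 0 there exists a Kakeya set K ⊆ ℝ² with Lebesgue measure |K| < ε. -/
open MeasureTheory

namespace KakeyaConstruction

open Set

/-! ### The Perron tree construction, in "slice" form.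

We build, for parameters `α ∈ [1/2,1)` and leaf width `w > 0`, a recursively defined
family of subsets `U j x ⊆ ℝ` (the slice at abscissa `x` of a union of `2^j` sheared
triangles).  The key estimates are proved by induction on `j`. -/

variable (α w : ℝ)

/-- `δ j = 1 - α^j`, the "trim" proportion at level `j`. -/
noncomputable def del (j : ℕ) : ℝ := 1 - α ^ j

/-- `W j = 2^j * w`, the total slope width at level `j`. -/
noncomputable def Wd (j : ℕ) : ℝ := 2 ^ j * w

/-- The vertical shift used when merging two level-`j` objects. -/
noncomputable def csh (j : ℕ) : ℝ := Wd w j * (2 * del α (j + 1) - del α j)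

/-- The slicewise translation amount. -/
noncomputable def tau (j : ℕ) (x : ℝ) : ℝ := Wd w j * x - csh α w j

/-- The recursively defined slice sets. -/
noncomputable def U : ℕ → ℝ → Set ℝ
  | 0, x => Icc 0 (w * x)
  | (j + 1), x => U j x ∪ ((· + tau α w j x) '' U j x)

/-- First error term at a merge. -/
noncomputable def e1 (j : ℕ) (x : ℝ) : ℝ :=
  Wd w j * (x - del α j) - max (Wd w (j + 1) * (x - del α (j + 1))) 0

/-- Second error term at a merge. -/
noncomputable def e2 (j : ℕ) (x : ℝ) : ℝ :=
  min (csh α w j - Wd w j * x) (Wd w j * (x - del α j))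

/-- The accumulated error bound. -/
noncomputable def E : ℕ → ℝ → ENNReal
  | 0, _ => 0
  | (j + 1), x => E j x + E j x + ENNReal.ofReal (e1 α w j x) + ENNReal.ofReal (e2 α w j x)

section Lemmas

variable {α w : ℝ}

lemma alpha_nonneg (hα : 1 / 2 ≤ α) : 0 ≤ α := le_trans (by norm_num) hα

lemma pow_le_one' (hα : 1 / 2 ≤ α) (hα1 : α ≤ 1) (j : ℕ) : α ^ j ≤ 1 := pow_le_one₀ (alpha_nonneg hα) hα1

lemma del_nonneg (hα : 1 / 2 ≤ α) (hα1 : α ≤ 1) (j : ℕ) : 0 ≤ del α j := by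
  have := pow_le_one' hα hα1 j; simp [del]; linarith

lemma del_le_one (hα : 1 / 2 ≤ α) (hα1 : α ≤ 1) (j : ℕ) : del α j ≤ 1 := by
  have : 0 ≤ α ^ j := pow_nonneg (alpha_nonneg hα) j
  simp [del]; linarith

lemma del_mono (hα : 1 / 2 ≤ α) (hα1 : α ≤ 1) (j : ℕ) : del α j ≤ del α (j + 1) := by
  have h : α ^ (j + 1) ≤ α ^ j := by
    calc α ^ (j + 1) = α ^ j * α := by ring
    _ ≤ α ^ j * 1 := by
        have : 0 ≤ α ^ j := pow_nonneg (alpha_nonneg hα) j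
        nlinarith
    _ = α ^ j := by ring
  simp [del]; linarith

lemma Wd_pos (hw : 0 < w) (j : ℕ) : 0 < Wd w j := by
  have : (0:ℝ) < 2 ^ j := by positivity
  exact mul_pos this hw

lemma Wd_succ (j : ℕ) : Wd w (j + 1) = 2 * Wd w j := by simp [Wd]; ring

lemma csh_nonneg (hα : 1 / 2 ≤ α) (hα1 : α ≤ 1) (hw : 0 < w) (j : ℕ) : 0 ≤ csh α w j := by
  have h1 : 0 ≤ Wd w j := (Wd_pos hw j).le
  have h2 : α ^ j ≤ 1 := pow_le_one' hα hα1 j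
  have h3 : 0 ≤ α ^ j := pow_nonneg (alpha_nonneg hα) j
  have h4 : 0 ≤ 2 * del α (j + 1) - del α j := by
    simp only [del, pow_succ]
    nlinarith
  exact mul_nonneg h1 h4

lemma csh_le (hα : 1 / 2 ≤ α) (hα1 : α ≤ 1) (hw : 0 < w) (j : ℕ) : csh α w j ≤ 2 * Wd w j := by
  have h1 : 0 ≤ Wd w j := (Wd_pos hw j).le
  have h2 : 2 * del α (j + 1) - del α j ≤ 2 := by
    have := del_le_one hα hα1 (j + 1)
    have := del_nonneg hα hα1 j
    linarith
  calc csh α w j ≤ Wd w j * 2 := by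
        unfold csh; nlinarith
  _ = 2 * Wd w j := by ring

lemma key_identity (j : ℕ) (x : ℝ) :
    tau α w j x + Wd w j * (x - del α j) = Wd w (j + 1) * (x - del α (j + 1)) := by
  simp only [tau, csh, Wd_succ]; ring

lemma measurableSet_U (j : ℕ) (x : ℝ) : MeasurableSet (U α w j x) := by
  induction j with
  | zero => exact measurableSet_Icc
  | succ j ih =>
    refine MeasurableSet.union ih ?_
    rw [Set.image_add_right]
    exact (measurable_add_const _) ih

lemma volume_image_add (τ : ℝ) (s : Set ℝ) :
    volume ((· + τ) '' s) = volume s := by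
  rw [Set.image_add_right]
  exact measure_preimage_add_right volume (-τ) s

lemma U_diff_core (j : ℕ) (x : ℝ) :
    volume (U α w j x \ Icc 0 (Wd w j * (x - del α j))) ≤ E α w j x := by
  induction j with
  | zero =>
      have h : Wd w 0 * (x - del α 0) = w * x := by simp [Wd, del]
      rw [h]
      simp [U, E]
  | succ j ih =>
      have hMM' : tau α w j x + Wd w j * (x - del α j)
          = Wd w (j + 1) * (x - del α (j + 1)) := key_identity j x
      set τ := tau α w j x with hτ
      set M := Wd w j * (x - del α j) with hM
      set M' := Wd w (j + 1) * (x - del α (j + 1)) with hM'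
      set A := U α w j x with hA
      have hsplit : U α w (j + 1) x \ Icc 0 M' ⊆
          ((A \ Icc 0 M) ∪ ((· + τ) '' (A \ Icc 0 M))) ∪
          ((Icc 0 M \ Icc 0 M') ∪ (((· + τ) '' Icc 0 M) \ Icc 0 M')) := by
        intro y hy
        obtain ⟨hyU, hyC'⟩ := hy
        rcases hyU with hyA | hyA'
        · by_cases hyC : y ∈ Icc (0:ℝ) M
          · exact Or.inr (Or.inl ⟨hyC, hyC'⟩)
          · exact Or.inl (Or.inl ⟨hyA, hyC⟩)
        · obtain ⟨z, hz, rfl⟩ := hyA'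
          by_cases hzC : z ∈ Icc (0:ℝ) M
          · exact Or.inr (Or.inr ⟨⟨z, hzC, rfl⟩, hyC'⟩)
          · exact Or.inl (Or.inr ⟨z, ⟨hz, hzC⟩, rfl⟩)
      have himg : volume ((· + τ) '' (A \ Icc 0 M)) = volume (A \ Icc 0 M) :=
        volume_image_add τ _
      have he1 : volume (Icc 0 M \ Icc 0 M') ≤ ENNReal.ofReal (e1 α w j x) := by
        have hsub : Icc 0 M \ Icc 0 M' ⊆ Icc (max M' 0) M := by
          intro y ⟨⟨hy0, hyM⟩, hnot⟩
          simp only [mem_Icc, not_and, not_le] at hnot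
          exact ⟨max_le (le_of_lt (hnot hy0)) hy0, hyM⟩
        calc volume (Icc 0 M \ Icc 0 M') ≤ volume (Icc (max M' 0) M) := measure_mono hsub
        _ = ENNReal.ofReal (M - max M' 0) := Real.volume_Icc
        _ = ENNReal.ofReal (e1 α w j x) := by
              rw [hM, hM']
              unfold e1
              rfl
      have he2 : volume (((· + τ) '' Icc 0 M) \ Icc 0 M') ≤
          ENNReal.ofReal (e2 α w j x) := by
        have himg2 : (· + τ) '' Icc (0:ℝ) M = Icc τ M' := by
          rw [image_add_const_Icc]
          have : M + τ = M' := by linarith [hMM']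
          rw [zero_add, this]
        have hsub : Icc τ M' \ Icc 0 M' ⊆ Icc τ (min M' 0) := by
          intro y ⟨⟨hyτ, hyM'⟩, hnot⟩
          simp only [mem_Icc, not_and, not_le] at hnot
          by_cases hy0 : 0 ≤ y
          · exact absurd hyM' (not_le_of_gt (hnot hy0))
          · exact ⟨hyτ, le_min hyM' (le_of_lt (lt_of_not_ge hy0))⟩
        have hval : min M' 0 - τ = e2 α w j x := by
          have h1 : M' - τ = M := by linarith [hMM']
          have h2 : (0:ℝ) - τ = csh α w j - Wd w j * x := by
            rw [hτ]; unfold tau; ring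
          have hmin : min M' 0 - τ = min (M' - τ) (0 - τ) := (min_sub_sub_right M' 0 τ).symm
          rw [hmin, h1, h2, min_comm, hM]
          unfold e2
          rfl
        calc volume (((· + τ) '' Icc 0 M) \ Icc 0 M')
            = volume (Icc τ M' \ Icc 0 M') := by rw [himg2]
        _ ≤ volume (Icc τ (min M' 0)) := measure_mono hsub
        _ = ENNReal.ofReal (min M' 0 - τ) := Real.volume_Icc
        _ = ENNReal.ofReal (e2 α w j x) := by rw [hval]
      calc volume (U α w (j + 1) x \ Icc 0 M')
          ≤ volume (((A \ Icc 0 M) ∪ ((· + τ) '' (A \ Icc 0 M))) ∪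
            ((Icc 0 M \ Icc 0 M') ∪ (((· + τ) '' Icc 0 M) \ Icc 0 M'))) :=
            measure_mono hsplit
      _ ≤ (volume (A \ Icc 0 M) + volume ((· + τ) '' (A \ Icc 0 M))) +
            (volume (Icc 0 M \ Icc 0 M') + volume (((· + τ) '' Icc 0 M) \ Icc 0 M')) :=
            le_trans (measure_union_le _ _)
              (add_le_add (measure_union_le _ _) (measure_union_le _ _))
      _ ≤ (E α w j x + E α w j x) +
            (ENNReal.ofReal (e1 α w j x) + ENNReal.ofReal (e2 α w j x)) := by
            rw [himg]
            exact add_le_add (add_le_add ih ih) (add_le_add he1 he2)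
      _ = E α w (j + 1) x := by rw [E]; ring

lemma err_le_indicator (hα : 1 / 2 ≤ α) (hα1 : α ≤ 1) (hw : 0 < w) (j : ℕ) (x : ℝ) :
    ENNReal.ofReal (e1 α w j x) + ENNReal.ofReal (e2 α w j x) ≤
      Set.indicator (Icc (del α j) (del α j + 2 * (del α (j + 1) - del α j)))
        (fun _ => ENNReal.ofReal (2 * Wd w j * (del α (j + 1) - del α j)) +
          ENNReal.ofReal (2 * Wd w j * (del α (j + 1) - del α j))) x := by
  set δ := del α j with hδ
  set δ' := del α (j + 1) with hδ'
  set W := Wd w j with hW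
  have hWpos : 0 < W := Wd_pos hw j
  have hD : δ ≤ δ' := del_mono hα hα1 j
  have hcsh : csh α w j = W * (δ + 2 * (δ' - δ)) := by
    rw [csh, hW, hδ, hδ']; ring
  have hW' : Wd w (j + 1) = 2 * W := Wd_succ j
  by_cases hx : x ∈ Icc δ (δ + 2 * (δ' - δ))
  · rw [Set.indicator_of_mem hx]
    obtain ⟨hx1, hx2⟩ := hx
    refine add_le_add (ENNReal.ofReal_le_ofReal ?_) (ENNReal.ofReal_le_ofReal ?_)
    · unfold e1
      rw [← hW, ← hδ]
      have h0 : 0 ≤ max (Wd w (j + 1) * (x - δ')) 0 := le_max_right _ _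
      nlinarith
    · unfold e2
      rw [← hW, ← hδ]
      refine le_trans (min_le_right _ _) ?_
      nlinarith
  · rw [Set.indicator_of_notMem hx]
    rw [mem_Icc, not_and_or] at hx
    have h12 : e1 α w j x ≤ 0 ∧ e2 α w j x ≤ 0 := by
      rcases hx with hx | hx
      · push_neg at hx
        constructor
        · unfold e1
          rw [← hW, ← hδ]
          have h0 : 0 ≤ max (Wd w (j + 1) * (x - δ')) 0 := le_max_right _ _
          nlinarith
        · unfold e2
          rw [← hW, ← hδ]
          refine le_trans (min_le_right _ _) ?_
          nlinarith
      · push_neg at hx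
        constructor
        · unfold e1
          rw [← hW, ← hδ, hW']
          have hM' : 0 ≤ 2 * W * (x - δ') := by nlinarith
          rw [max_eq_left (by rw [← hδ']; nlinarith)]
          rw [← hδ']
          nlinarith
        · unfold e2
          rw [← hW]
          refine le_trans (min_le_left _ _) ?_
          rw [hcsh]
          nlinarith
    simp [ENNReal.ofReal_eq_zero.2 h12.1, ENNReal.ofReal_eq_zero.2 h12.2]

lemma measurable_E (j : ℕ) : Measurable (E α w j) := by
  induction j with
  | zero => exact measurable_const
  | succ j ih =>
    have h1 : Measurable fun x => ENNReal.ofReal (e1 α w j x) := by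
      apply ENNReal.measurable_ofReal.comp
      unfold e1
      fun_prop
    have h2 : Measurable fun x => ENNReal.ofReal (e2 α w j x) := by
      apply ENNReal.measurable_ofReal.comp
      unfold e2
      fun_prop
    exact (((ih.add ih).add h1).add h2)

lemma lintegral_err (hα : 1 / 2 ≤ α) (hα1 : α ≤ 1) (hw : 0 < w) (j : ℕ) :
    (∫⁻ x, (ENNReal.ofReal (e1 α w j x) + ENNReal.ofReal (e2 α w j x))) ≤
      ENNReal.ofReal (8 * Wd w j * (del α (j + 1) - del α j) ^ 2) := by
  have hD : 0 ≤ del α (j + 1) - del α j := by linarith [del_mono hα hα1 j]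
  have hWpos : (0:ℝ) < Wd w j := Wd_pos hw j
  calc (∫⁻ x, (ENNReal.ofReal (e1 α w j x) + ENNReal.ofReal (e2 α w j x)))
      ≤ ∫⁻ x, Set.indicator (Icc (del α j) (del α j + 2 * (del α (j + 1) - del α j)))
        (fun _ => ENNReal.ofReal (2 * Wd w j * (del α (j + 1) - del α j)) +
          ENNReal.ofReal (2 * Wd w j * (del α (j + 1) - del α j))) x :=
        lintegral_mono (fun x => err_le_indicator hα hα1 hw j x)
  _ = (ENNReal.ofReal (2 * Wd w j * (del α (j + 1) - del α j)) +
        ENNReal.ofReal (2 * Wd w j * (del α (j + 1) - del α j))) *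
        volume (Icc (del α j) (del α j + 2 * (del α (j + 1) - del α j))) :=
        lintegral_indicator_const measurableSet_Icc _
  _ ≤ ENNReal.ofReal (8 * Wd w j * (del α (j + 1) - del α j) ^ 2) := by
        rw [Real.volume_Icc, ← ENNReal.ofReal_add (by positivity) (by positivity),
          ← ENNReal.ofReal_mul (by positivity)]
        apply ENNReal.ofReal_le_ofReal
        nlinarith

lemma lintegral_E (hα : 1 / 2 ≤ α) (hα1 : α < 1) (hw : 0 < w) (j : ℕ) :
    (∫⁻ x, E α w j x) ≤
      ENNReal.ofReal (8 * w * (1 - α) ^ 2 * 2 ^ j * (1 - α ^ (2 * j)) / (1 - α ^ 2)) := by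
  have hα1' : α ≤ 1 := hα1.le
  have h2 : (0:ℝ) < 1 - α ^ 2 := by nlinarith [alpha_nonneg hα]
  induction j with
  | zero => simp [E]
  | succ j ih =>
    have hrw : (∫⁻ x, E α w (j + 1) x) =
        (∫⁻ x, E α w j x) + (∫⁻ x, E α w j x) +
          (∫⁻ x, (ENNReal.ofReal (e1 α w j x) + ENNReal.ofReal (e2 α w j x))) := by
      have heq : ∀ x, E α w (j + 1) x =
          (E α w j x + E α w j x) +
            (ENNReal.ofReal (e1 α w j x) + ENNReal.ofReal (e2 α w j x)) := by
        intro x; rw [E]; ring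
      rw [lintegral_congr heq, lintegral_add_left (f := fun x => E α w j x + E α w j x) ((measurable_E j).add (measurable_E j)),
        lintegral_add_left (measurable_E j)]
    rw [hrw]
    have herr := lintegral_err hα hα1' hw j
    have hDval : del α (j + 1) - del α j = α ^ j * (1 - α) := by
      simp only [del]; ring
    have hnum : 8 * w * (1 - α) ^ 2 * 2 ^ j * (1 - α ^ (2 * j)) / (1 - α ^ 2) +
        8 * w * (1 - α) ^ 2 * 2 ^ j * (1 - α ^ (2 * j)) / (1 - α ^ 2) +
        8 * Wd w j * (α ^ j * (1 - α)) ^ 2 ≤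
        8 * w * (1 - α) ^ 2 * 2 ^ (j + 1) * (1 - α ^ (2 * (j + 1))) / (1 - α ^ 2) := by
      have hexp : 8 * w * (1 - α) ^ 2 * 2 ^ (j + 1) * (1 - α ^ (2 * (j + 1))) / (1 - α ^ 2)
          = 8 * w * (1 - α) ^ 2 * 2 ^ j * (1 - α ^ (2 * j)) / (1 - α ^ 2) +
            8 * w * (1 - α) ^ 2 * 2 ^ j * (1 - α ^ (2 * j)) / (1 - α ^ 2) +
            (8 * (2 ^ j * w) * (α ^ j * (1 - α)) ^ 2 +
              8 * w * (1 - α) ^ 2 * 2 ^ j * α ^ (2 * j)) := by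
        field_simp
        ring
      rw [hexp, Wd]
      have : (0:ℝ) ≤ 8 * w * (1 - α) ^ 2 * 2 ^ j * α ^ (2 * j) := by positivity
      linarith
    calc (∫⁻ x, E α w j x) + (∫⁻ x, E α w j x) +
        (∫⁻ x, (ENNReal.ofReal (e1 α w j x) + ENNReal.ofReal (e2 α w j x)))
        ≤ ENNReal.ofReal (8 * w * (1 - α) ^ 2 * 2 ^ j * (1 - α ^ (2 * j)) / (1 - α ^ 2)) +
          ENNReal.ofReal (8 * w * (1 - α) ^ 2 * 2 ^ j * (1 - α ^ (2 * j)) / (1 - α ^ 2)) +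
          ENNReal.ofReal (8 * Wd w j * (del α (j + 1) - del α j) ^ 2) :=
          add_le_add (add_le_add ih ih) herr
    _ = ENNReal.ofReal (8 * w * (1 - α) ^ 2 * 2 ^ j * (1 - α ^ (2 * j)) / (1 - α ^ 2) +
          8 * w * (1 - α) ^ 2 * 2 ^ j * (1 - α ^ (2 * j)) / (1 - α ^ 2) +
          8 * Wd w j * (del α (j + 1) - del α j) ^ 2) := by
          have hp1 : (0:ℝ) ≤ 8 * w * (1 - α) ^ 2 * 2 ^ j * (1 - α ^ (2 * j)) / (1 - α ^ 2) := by
            have : α ^ (2 * j) ≤ 1 := pow_le_one₀ (alpha_nonneg hα) hα1'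
            have h8 : (0:ℝ) ≤ 8 * w * (1 - α) ^ 2 * 2 ^ j := by positivity
            apply div_nonneg (by nlinarith) h2.le
          have hp2 : (0:ℝ) ≤ 8 * Wd w j * (del α (j + 1) - del α j) ^ 2 := by
            have := (Wd_pos hw j).le; positivity
          rw [ENNReal.ofReal_add (by linarith) hp2, ENNReal.ofReal_add hp1 hp1]
    _ ≤ ENNReal.ofReal (8 * w * (1 - α) ^ 2 * 2 ^ (j + 1) * (1 - α ^ (2 * (j + 1))) / (1 - α ^ 2)) := by
          apply ENNReal.ofReal_le_ofReal
          rw [hDval]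
          exact hnum

lemma Wd_zero : Wd w 0 = w := by simp [Wd]

lemma cover (j : ℕ) :
    ∀ s : ℝ, 0 ≤ s → s ≤ Wd w j → ∃ o : ℝ, ∀ x ∈ Icc (0:ℝ) 1, s * x + o ∈ U α w j x := by
  induction j with
  | zero =>
    intro s h0 h1
    rw [Wd_zero] at h1
    refine ⟨0, fun x hx => ?_⟩
    simp only [U, mem_Icc, add_zero]
    constructor
    · exact mul_nonneg h0 hx.1
    · nlinarith [hx.1]
  | succ j ih =>
    intro s h0 h1
    rcases le_or_gt s (Wd w j) with h | h
    · obtain ⟨o, ho⟩ := ih s h0 h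
      exact ⟨o, fun x hx => Or.inl (ho x hx)⟩
    · rw [Wd_succ] at h1
      obtain ⟨o, ho⟩ := ih (s - Wd w j) (by linarith) (by linarith)
      refine ⟨o - csh α w j, fun x hx => Or.inr ⟨(s - Wd w j) * x + o, ho x hx, ?_⟩⟩
      unfold tau; ring

/-- The planar Kakeya-type set: union of `2^k` sheared triangles. -/
def planeSet (α w : ℝ) (k : ℕ) : Set (ℝ × ℝ) :=
  {p | p.1 ∈ Icc (0:ℝ) 1 ∧ p.2 + p.1 ∈ U α w k p.1}

lemma isClosed_graphU (j : ℕ) : IsClosed {p : ℝ × ℝ | p.2 ∈ U α w j p.1} := by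
  induction j with
  | zero =>
    have : {p : ℝ × ℝ | p.2 ∈ U α w 0 p.1} =
        {p : ℝ × ℝ | 0 ≤ p.2} ∩ {p : ℝ × ℝ | p.2 ≤ w * p.1} := by
      ext p; simp [U, mem_Icc]
    rw [this]
    exact (isClosed_le continuous_const continuous_snd).inter
      (isClosed_le continuous_snd (continuous_const.mul continuous_fst))
  | succ j ih =>
    have : {p : ℝ × ℝ | p.2 ∈ U α w (j + 1) p.1} =
        {p : ℝ × ℝ | p.2 ∈ U α w j p.1} ∪
          ((fun p : ℝ × ℝ => (p.1, p.2 - tau α w j p.1)) ⁻¹'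
            {p : ℝ × ℝ | p.2 ∈ U α w j p.1}) := by
      ext p
      simp only [U, mem_union, mem_setOf_eq, mem_preimage, Set.image_add_right, mem_preimage]
      rw [sub_eq_add_neg]
    rw [this]
    refine ih.union (IsClosed.preimage ?_ ih)
    exact continuous_fst.prodMk (continuous_snd.sub
      ((continuous_const.mul continuous_fst).sub continuous_const))

lemma isClosed_planeSet (k : ℕ) : IsClosed (planeSet α w k) := by
  have : planeSet α w k = (Icc (0:ℝ) 1 ×ˢ (univ : Set ℝ)) ∩
      ((fun p : ℝ × ℝ => (p.1, p.2 + p.1)) ⁻¹' {p : ℝ × ℝ | p.2 ∈ U α w k p.1}) := by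
    ext p
    simp [planeSet, mem_prod]
  rw [this]
  exact (isClosed_Icc.prod isClosed_univ).inter
    (IsClosed.preimage (continuous_fst.prodMk (continuous_snd.add continuous_fst))
      (isClosed_graphU k))

lemma U_bdd (hα : 1 / 2 ≤ α) (hα1 : α ≤ 1) (hw : 0 < w) (j : ℕ) (x : ℝ)
    (hx : x ∈ Icc (0:ℝ) 1) : U α w j x ⊆ Icc (-(2 ^ (j + 1) * w)) (Wd w j * x) := by
  induction j with
  | zero =>
    intro y hy
    simp only [U, mem_Icc] at hy
    rw [Wd_zero]
    constructor
    · have h2 : (2:ℝ) ^ (0 + 1) = 2 := by norm_num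
      rw [h2]
      nlinarith [hy.1, hw]
    · exact hy.2
  | succ j ih =>
    have hcsh1 : 0 ≤ csh α w j := csh_nonneg hα hα1 hw j
    have hcsh2 : csh α w j ≤ 2 * Wd w j := csh_le hα hα1 hw j
    have hWd : Wd w j = 2 ^ j * w := rfl
    have hWx : 0 ≤ Wd w j * x := mul_nonneg (Wd_pos hw j).le hx.1
    intro y hy
    rcases hy with hy | ⟨z, hz, rfl⟩
    · have := ih hy
      rw [mem_Icc] at this ⊢
      rw [Wd_succ]
      constructor
      · have : -(2 ^ (j + 1 + 1) * w) ≤ -(2 ^ (j + 1) * w) := by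
          have : (0:ℝ) < 2 ^ (j + 1) * w := by positivity
          have h2 : (2:ℝ) ^ (j + 1) * w ≤ 2 ^ (j + 1 + 1) * w := by
            have : (2:ℝ) ^ (j + 1) ≤ 2 ^ (j + 1 + 1) :=
              pow_le_pow_right₀ (by norm_num) (by omega)
            nlinarith
          linarith
        linarith [this, (ih hy).1]
      · nlinarith [(ih hy).2]
    · have hzb := ih hz
      rw [mem_Icc] at hzb ⊢
      unfold tau
      rw [Wd_succ]
      dsimp only
      constructor
      · have h2 : (2:ℝ) ^ (j + 1) * w + csh α w j ≤ 2 ^ (j + 1 + 1) * w := by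
          have : csh α w j ≤ 2 * (2 ^ j * w) := by rw [← hWd]; exact hcsh2
          have hp : (2:ℝ) ^ (j + 1 + 1) = 2 * 2 ^ (j + 1) := by ring
          have hp2 : (2:ℝ) ^ (j + 1) = 2 * 2 ^ j := by ring
          nlinarith
        linarith [hzb.1, hWx]
      · linarith [hzb.2, hcsh1]

lemma planeSet_bdd (hα : 1 / 2 ≤ α) (hα1 : α ≤ 1) (hw : 0 < w) (k : ℕ) :
    planeSet α w k ⊆ Icc (0:ℝ) 1 ×ˢ Icc (-(2 ^ (k + 1) * w) - 1) (2 ^ k * w) := by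
  rintro ⟨x, y⟩ ⟨hx, hy⟩
  have := U_bdd hα hα1 hw k x hx hy
  rw [mem_Icc] at this
  rw [mem_prod]
  refine ⟨hx, ?_, ?_⟩
  · have := this.1; simp only [mem_Icc] at hx; linarith [hx.1, hx.2]
  · have h2 := this.2
    have hWd : Wd w k = 2 ^ k * w := rfl
    have hle : Wd w k * x ≤ 2 ^ k * w := by
      rw [hWd]
      simp only [mem_Icc] at hx
      nlinarith [hx.1, hx.2, hw, pow_pos (by norm_num : (0:ℝ) < 2) k,
        mul_nonneg (mul_pos (pow_pos (by norm_num : (0:ℝ) < 2) k) hw).le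
          (sub_nonneg.2 hx.2)]
    simp only [mem_Icc] at hx
    linarith [hx.1]

lemma volume_planeSet_le (hα : 1 / 2 ≤ α) (hα1 : α < 1) (hw : 0 < w) (k : ℕ) :
    volume (planeSet α w k) ≤
      ENNReal.ofReal (Wd w k * α ^ k) +
        ENNReal.ofReal (8 * w * (1 - α) ^ 2 * 2 ^ k * (1 - α ^ (2 * k)) / (1 - α ^ 2)) := by
  have hmeas : MeasurableSet (planeSet α w k) := (isClosed_planeSet k).measurableSet
  have hslice : ∀ x : ℝ, volume (Prod.mk x ⁻¹' planeSet α w k) ≤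
      Set.indicator (Icc (0:ℝ) 1) (fun _ => ENNReal.ofReal (Wd w k * α ^ k)) x + E α w k x := by
    intro x
    by_cases hx : x ∈ Icc (0:ℝ) 1
    · have hpre : Prod.mk x ⁻¹' planeSet α w k = (fun y => y + x) ⁻¹' (U α w k x) := by
        ext y
        constructor
        · rintro ⟨-, h⟩; exact h
        · intro h; exact ⟨hx, h⟩
      rw [hpre, measure_preimage_add_right]
      have hsub : U α w k x ⊆ Icc 0 (Wd w k * (x - del α k)) ∪
          (U α w k x \ Icc 0 (Wd w k * (x - del α k))) := fun y hy => by
        by_cases h : y ∈ Icc 0 (Wd w k * (x - del α k))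
        · exact Or.inl h
        · exact Or.inr ⟨hy, h⟩
      calc volume (U α w k x)
          ≤ volume (Icc 0 (Wd w k * (x - del α k))) +
            volume (U α w k x \ Icc 0 (Wd w k * (x - del α k))) :=
            le_trans (measure_mono hsub) (measure_union_le _ _)
      _ ≤ ENNReal.ofReal (Wd w k * α ^ k) + E α w k x := by
          refine add_le_add ?_ (U_diff_core k x)
          rw [Real.volume_Icc]
          apply ENNReal.ofReal_le_ofReal
          have h1 : x ≤ 1 := hx.2
          have h2 : x - del α k ≤ α ^ k := by simp only [del]; linarith
          nlinarith [(Wd_pos hw k).le, pow_nonneg (alpha_nonneg hα) k]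
      _ = Set.indicator (Icc (0:ℝ) 1) (fun _ => ENNReal.ofReal (Wd w k * α ^ k)) x
            + E α w k x := by rw [Set.indicator_of_mem hx]
    · have hpre : Prod.mk x ⁻¹' planeSet α w k = ∅ := by
        ext y
        simp only [Set.mem_preimage, Set.mem_empty_iff_false, iff_false]
        intro h
        exact hx h.1
      rw [hpre]
      simp
  calc volume (planeSet α w k)
      = ∫⁻ x, volume (Prod.mk x ⁻¹' planeSet α w k) := by
        rw [MeasureTheory.Measure.volume_eq_prod]
        exact Measure.prod_apply hmeas
  _ ≤ ∫⁻ x, (Set.indicator (Icc (0:ℝ) 1) (fun _ => ENNReal.ofReal (Wd w k * α ^ k)) x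
        + E α w k x) := lintegral_mono hslice
  _ = (∫⁻ x, Set.indicator (Icc (0:ℝ) 1) (fun _ => ENNReal.ofReal (Wd w k * α ^ k)) x)
        + ∫⁻ x, E α w k x := by
        refine lintegral_add_left ?_ _
        exact (measurable_const.indicator measurableSet_Icc)
  _ ≤ ENNReal.ofReal (Wd w k * α ^ k) +
        ENNReal.ofReal (8 * w * (1 - α) ^ 2 * 2 ^ k * (1 - α ^ (2 * k)) / (1 - α ^ 2)) := by
        refine add_le_add ?_ (lintegral_E hα hα1 hw k)
        rw [lintegral_indicator_const measurableSet_Icc, Real.volume_Icc]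
        simp

lemma line_in_planeSet (hWk : Wd w k' = 2) (σ : ℝ) (hσ : |σ| ≤ 1) :
    ∃ o : ℝ, ∀ X ∈ Icc (0:ℝ) 1, (X, σ * X + o) ∈ planeSet α w k' := by
  rw [abs_le] at hσ
  obtain ⟨o, ho⟩ := cover k' (σ + 1) (by linarith) (by rw [hWk]; linarith)
  refine ⟨o, fun X hX => ⟨hX, ?_⟩⟩
  have : σ * X + o + X = (σ + 1) * X + o := by ring
  rw [this]
  exact ho X hX

lemma seg_exists (hWk : Wd w k' = 2) (u v : ℝ) (hu : u ≠ 0) (huv : |v| ≤ |u|)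
    (hu1 : u ^ 2 ≤ 1) :
    ∃ x₀ o : ℝ, ∀ t ∈ Icc (0:ℝ) 1,
      (x₀ + t * u, v / u * x₀ + o + t * v) ∈ planeSet α w k' := by
  have hσ : |v / u| ≤ 1 := by
    rw [abs_div]
    exact (div_le_one (abs_pos.2 hu)).2 huv
  obtain ⟨o, ho⟩ := line_in_planeSet hWk (v / u) hσ
  have habs : |u| ≤ 1 := by nlinarith [sq_abs u, abs_nonneg u]
  have hu_le : u ≤ 1 := le_trans (le_abs_self u) habs
  have hu_ge : -1 ≤ u := by
    have := neg_abs_le u; linarith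
  refine ⟨if 0 ≤ u then 0 else 1, o, fun t ht => ?_⟩
  obtain ⟨ht0, ht1⟩ := ht
  set x₀ : ℝ := if 0 ≤ u then 0 else 1 with hx₀
  have hX : x₀ + t * u ∈ Icc (0:ℝ) 1 := by
    by_cases h : 0 ≤ u
    · rw [hx₀, if_pos h]
      constructor
      · nlinarith
      · nlinarith
    · push_neg at h
      rw [hx₀, if_neg (not_le.2 h)]
      constructor
      · nlinarith
      · nlinarith
  have hline := ho (x₀ + t * u) hX
  have hcoord : v / u * (x₀ + t * u) + o = v / u * x₀ + o + t * v := by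
    have : v / u * u = v := div_mul_cancel₀ v hu
    calc v / u * (x₀ + t * u) + o = v / u * x₀ + o + t * (v / u * u) := by ring
    _ = v / u * x₀ + o + t * v := by rw [this]
  rw [hcoord] at hline
  exact hline

end Lemmas

end KakeyaConstruction

set_option maxHeartbeats 1000000 in
/-- **Kakeya sets of arbitrarily small area**: for every `ε > 0` there is a Kakeya set
`K ⊆ ℝ²` with `|K| < ε`. -/
theorem kakeya_arbitrarily_small_area (ε : ℝ) (hε : 0 < ε) :
    ∃ K : Set (EuclideanSpace ℝ (Fin 2)), IsKakeya K ∧ volume K < ENNReal.ofReal ε := by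
  classical
  open KakeyaConstruction Set in
  -- choice of parameters
  set ε' := min ε 1 with hε'def
  have hε'pos : 0 < ε' := lt_min hε one_pos
  have hε'le1 : ε' ≤ 1 := min_le_right _ _
  have hε'leε : ε' ≤ ε := min_le_left _ _
  set α := 1 - ε' / 64 with hαdef
  have hα : 1 / 2 ≤ α := by rw [hαdef]; linarith
  have hα1 : α < 1 := by rw [hαdef]; linarith
  have hα0 : 0 ≤ α := alpha_nonneg hα
  obtain ⟨k, hk⟩ := exists_pow_lt_of_lt_one (show (0:ℝ) < ε' / 8 by linarith) hα1
  set w : ℝ := 2 / 2 ^ k with hwdef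
  have hw : 0 < w := by rw [hwdef]; positivity
  have h2kw : (2:ℝ) ^ k * w = 2 := by
    rw [hwdef]; field_simp
  have hWk : Wd w k = 2 := by rw [Wd]; exact h2kw
  clear_value α w ε' 
  -- the planar set
  set P := planeSet α w k with hPdef
  set Q := Prod.swap ⁻¹' P with hQdef
  have hPclosed : IsClosed P := isClosed_planeSet k
  have hQclosed : IsClosed Q := hPclosed.preimage continuous_swap
  -- volume bound for P
  have h2pos : (0:ℝ) < 1 - α ^ 2 := by nlinarith
  have hXle : 8 * w * (1 - α) ^ 2 * 2 ^ k * (1 - α ^ (2 * k)) / (1 - α ^ 2)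
      ≤ 16 * (1 - α) := by
    rw [div_le_iff₀ h2pos]
    have h8 : 8 * w * (1 - α) ^ 2 * (2:ℝ) ^ k = 16 * (1 - α) ^ 2 := by
      calc 8 * w * (1 - α) ^ 2 * (2:ℝ) ^ k = 8 * ((2:ℝ) ^ k * w) * (1 - α) ^ 2 := by ring
      _ = 16 * (1 - α) ^ 2 := by norm_num [h2kw]
    have hQ1 : 0 ≤ α ^ (2 * k) := pow_nonneg hα0 _
    have hQ2 : α ^ (2 * k) ≤ 1 := pow_le_one₀ hα0 hα1.le
    calc 8 * w * (1 - α) ^ 2 * 2 ^ k * (1 - α ^ (2 * k))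
        = 8 * w * (1 - α) ^ 2 * (2:ℝ) ^ k * (1 - α ^ (2 * k)) := by ring
    _ = 16 * (1 - α) ^ 2 * (1 - α ^ (2 * k)) := by rw [h8]
    _ ≤ 16 * (1 - α) * (1 - α ^ 2) := by nlinarith
  have hvolP : volume P ≤ ENNReal.ofReal (2 * α ^ k + 16 * (1 - α)) := by
    refine le_trans (volume_planeSet_le hα hα1 hw k) ?_
    have ha : (0:ℝ) ≤ 2 * α ^ k := by
      have := pow_nonneg hα0 k; linarith
    have hb : (0:ℝ) ≤ 16 * (1 - α) := by linarith
    rw [ENNReal.ofReal_add ha hb]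
    refine add_le_add (ENNReal.ofReal_le_ofReal ?_) (ENNReal.ofReal_le_ofReal hXle)
    rw [hWk]
  -- volume of Q
  have hswapmp : MeasurePreserving (Prod.swap : ℝ × ℝ → ℝ × ℝ) volume volume := by
    rw [MeasureTheory.Measure.volume_eq_prod]
    exact Measure.measurePreserving_swap
  have hvolQ : volume Q = volume P :=
    hswapmp.measure_preimage hPclosed.measurableSet.nullMeasurableSet
  -- total volume
  have hvolPQ : volume (P ∪ Q) < ENNReal.ofReal ε := by
    have h1 : volume (P ∪ Q) ≤ ENNReal.ofReal (2 * α ^ k + 16 * (1 - α)) +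
        ENNReal.ofReal (2 * α ^ k + 16 * (1 - α)) := by
      refine le_trans (measure_union_le _ _) ?_
      rw [hvolQ]
      exact add_le_add hvolP hvolP
    have h2 : ENNReal.ofReal (2 * α ^ k + 16 * (1 - α)) +
        ENNReal.ofReal (2 * α ^ k + 16 * (1 - α)) =
        ENNReal.ofReal (4 * α ^ k + 32 * (1 - α)) := by
      have ha : (0:ℝ) ≤ 2 * α ^ k := by
        have := pow_nonneg hα0 k; linarith
      have hb : (0:ℝ) ≤ 16 * (1 - α) := by linarith
      rw [← ENNReal.ofReal_add (by linarith) (by linarith)]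
      congr 1; ring
    have h3 : 4 * α ^ k + 32 * (1 - α) < ε := by
      have hαk : α ^ k < ε' / 8 := hk
      have h1α : 32 * (1 - α) = ε' / 2 := by rw [hαdef]; ring
      have h5 : 4 * α ^ k < ε' / 2 := by linarith
      have h6 : 4 * α ^ k + 32 * (1 - α) < ε' := by linarith
      linarith
    calc volume (P ∪ Q) ≤ ENNReal.ofReal (4 * α ^ k + 32 * (1 - α)) := by rw [← h2]; exact h1
    _ < ENNReal.ofReal ε := (ENNReal.ofReal_lt_ofReal_iff hε).2 h3
  -- the Euclidean set
  set φ : EuclideanSpace ℝ (Fin 2) → ℝ × ℝ := fun v => (v 0, v 1) with hφdef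
  have hφcont : Continuous φ :=
    ((EuclideanSpace.proj (0 : Fin 2)).continuous).prodMk
      ((EuclideanSpace.proj (1 : Fin 2)).continuous)
  have hφmp : MeasurePreserving φ volume volume :=
    (MeasureTheory.volume_preserving_finTwoArrow ℝ).comp
      (EuclideanSpace.volume_preserving_symm_measurableEquiv_toLp (Fin 2))
  refine ⟨φ ⁻¹' (P ∪ Q), ⟨?_, ?_⟩, ?_⟩
  · -- compactness
    have hKclosed : IsClosed (φ ⁻¹' (P ∪ Q)) :=
      (hPclosed.union hQclosed).preimage hφcont
    -- boundedness
    have h4 : (2:ℝ) ^ (k + 1) * w = 4 := by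
      calc (2:ℝ) ^ (k + 1) * w = 2 * (2 ^ k * w) := by ring
      _ = 4 := by rw [h2kw]; ring
    have hPbdd : P ⊆ Icc (-5 : ℝ) 5 ×ˢ Icc (-5 : ℝ) 5 := by
      refine subset_trans (planeSet_bdd hα hα1.le hw k) ?_
      rintro ⟨x, y⟩ ⟨hx, hy⟩
      rw [mem_Icc] at hx hy
      rw [h4] at hy
      rw [h2kw] at hy
      exact ⟨⟨by linarith, by linarith⟩, ⟨by linarith, by linarith⟩⟩
    have hQbdd : Q ⊆ Icc (-5 : ℝ) 5 ×ˢ Icc (-5 : ℝ) 5 := by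
      rintro ⟨x, y⟩ hxy
      have := hPbdd hxy
      exact ⟨this.2, this.1⟩
    refine IsCompact.of_isClosed_subset (isCompact_closedBall (0 : EuclideanSpace ℝ (Fin 2)) 8)
      hKclosed ?_
    intro v hv
    have hco : (v 0, v 1) ∈ Icc (-5 : ℝ) 5 ×ˢ Icc (-5 : ℝ) 5 := by
      rcases hv with h | h
      · exact hPbdd h
      · exact hQbdd h
    obtain ⟨h0, h1⟩ := hco
    rw [mem_Icc] at h0 h1
    rw [Metric.mem_closedBall, dist_zero_right, EuclideanSpace.norm_eq, Fin.sum_univ_two]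
    have hsq : ‖v 0‖ ^ 2 + ‖v 1‖ ^ 2 ≤ 64 := by
      rw [Real.norm_eq_abs, Real.norm_eq_abs, sq_abs, sq_abs]
      nlinarith [h0.1, h0.2, h1.1, h1.2]
    calc Real.sqrt (‖v 0‖ ^ 2 + ‖v 1‖ ^ 2) ≤ Real.sqrt 64 := Real.sqrt_le_sqrt hsq
    _ = 8 := by
        rw [show (64:ℝ) = 8 ^ 2 by norm_num, Real.sqrt_sq (by norm_num : (0:ℝ) ≤ 8)]
  · -- Kakeya property
    intro ω hω
    have hsum : ω 0 ^ 2 + ω 1 ^ 2 = 1 := by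
      rw [EuclideanSpace.norm_eq, Fin.sum_univ_two, Real.sqrt_eq_one] at hω
      simpa [Real.norm_eq_abs, sq_abs] using hω
    rcases le_or_gt |ω 1| |ω 0| with hcase | hcase
    · -- shallow direction: use P
      have hω0 : ω 0 ≠ 0 := by
        intro h
        rw [h] at hcase hsum
        simp at hcase
        rw [hcase] at hsum
        norm_num at hsum
      have hu1 : ω 0 ^ 2 ≤ 1 := by nlinarith [sq_nonneg (ω 1)]
      obtain ⟨x₀, o, hseg⟩ := seg_exists hWk (ω 0) (ω 1) hω0 hcase hu1
      refine ⟨(WithLp.equiv 2 (Fin 2 → ℝ)).symm ![x₀, ω 1 / ω 0 * x₀ + o], fun t ht => ?_⟩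
      have hmem := hseg t ht
      exact Or.inl hmem
    · -- steep direction: use Q
      have hω1 : ω 1 ≠ 0 := by
        intro h
        rw [h] at hcase
        simp at hcase
        have : ω 0 = 0 := by
          have := abs_nonneg (ω 0); linarith [hcase]
        rw [h, this] at hsum
        norm_num at hsum
      have hu1 : ω 1 ^ 2 ≤ 1 := by nlinarith [sq_nonneg (ω 0)]
      obtain ⟨x₀, o, hseg⟩ := seg_exists hWk (ω 1) (ω 0) hω1 hcase.le hu1
      refine ⟨(WithLp.equiv 2 (Fin 2 → ℝ)).symm ![ω 0 / ω 1 * x₀ + o, x₀], fun t ht => ?_⟩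
      have hmem := hseg t ht
      exact Or.inr hmem
  · -- volume
    have := hφmp.measure_preimage
      ((hPclosed.union hQclosed).measurableSet.nullMeasurableSet (μ := volume))
    calc volume (φ ⁻¹' (P ∪ Q)) = volume (P ∪ Q) := this
    _ < ENNReal.ofReal ε := hvolPQ
end
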